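/- Let (Ω, 𝒜, P) be a probability space, let S be a finite Borel measure on S^{d-1}_+, and let (Ŝ_n)_{n∈ℕ} be random finite Borel measures on S^{d-1}_+ on (Ω, 𝒜, P) such that for every continuous f: S^{d-1}_+ → ℝ the random variables ∫ f(a) Ŝ_n(da) converge in probability to ∫ f(a) S(da). Let K ⊆ ℝ^m be a nonempty compact set and c: K × S^{d-1}_+ → ℝ continuous. Then sup_{θ∈K} |∫ c(θ,a) Ŝ_n(da) − ∫ c(θ,a) S(da)| converges to 0 in probability as n → ∞. -/

import Mathlib

open MeasureTheory Filter
open Topology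


theorem posSphere_isCompact {d : ℕ} (N : (Fin d → ℝ) → ℝ)
    (hN_tri : ∀ x y, N (x + y) ≤ N x + N y)
    (hN_smul : ∀ (c : ℝ) (x), N (c • x) = |c| * N x)
    (hN_def : ∀ x, N x = 0 → x = 0) :
    IsCompact {x : Fin d → ℝ | (∀ i, 0 ≤ x i) ∧ N x = 1} := by
  have hN0 : N 0 = 0 := by simpa using hN_smul 0 0
  have hNneg : ∀ x, N (-x) = N x := fun x => by simpa using hN_smul (-1) x
  have hnn : ∀ x, 0 ≤ N x := by
    intro x
    have h := hN_tri x (-x)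
    rw [add_neg_cancel, hN0, hNneg] at h
    linarith
  set e : Fin d → (Fin d → ℝ) := fun i => fun j => if i = j then 1 else 0 with he
  set C : ℝ := ∑ i, N (e i) with hC
  have hC0 : 0 ≤ C := Finset.sum_nonneg fun i _ => hnn _
  have hsub : ∀ x : Fin d → ℝ, N x ≤ C * ‖x‖ := by
    intro x
    have hxrep : x = ∑ i, x i • e i := pi_eq_sum_univ x
    calc N x = N (∑ i, x i • e i) := by rw [← hxrep]
      _ ≤ ∑ i, N (x i • e i) :=
        Finset.le_sum_of_subadditive N hN0.le hN_tri _ _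
      _ = ∑ i, |x i| * N (e i) := by simp [hN_smul]
      _ ≤ ∑ i, ‖x‖ * N (e i) := by
        refine Finset.sum_le_sum fun i _ => ?_
        exact mul_le_mul_of_nonneg_right (by simpa using norm_le_pi_norm x i) (hnn _)
      _ = C * ‖x‖ := by rw [← Finset.mul_sum]; ring
  have hdiff : ∀ x y : Fin d → ℝ, |N x - N y| ≤ C * ‖x - y‖ := by
    intro x y
    have h1 : N x - N y ≤ N (x - y) := by
      have := hN_tri y (x - y); simp at this; linarith
    have h2 : N y - N x ≤ N (x - y) := by
      have := hN_tri x (y - x)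
      have h3 : N (y - x) = N (x - y) := by rw [← hNneg (x - y)]; ring_nf
      simp at this
      linarith
    have := hsub (x - y)
    rw [abs_sub_le_iff]
    constructor <;> linarith
  have hNcont : Continuous N := by
    rw [Metric.continuous_iff]
    intro x ε hε
    rcases le_or_gt C 0 with h | h
    · exact ⟨1, one_pos, fun y _ => by
        rw [Real.dist_eq]
        have := hdiff y x
        have h2 : C * ‖y - x‖ ≤ 0 := mul_nonpos_of_nonpos_of_nonneg h (norm_nonneg _)
        calc |N y - N x| ≤ C * ‖y - x‖ := this
          _ ≤ 0 := h2
          _ < ε := hε⟩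
    · refine ⟨ε / C, by positivity, fun y hy => ?_⟩
      rw [Real.dist_eq]
      calc |N y - N x| ≤ C * ‖y - x‖ := hdiff y x
        _ = C * dist y x := by rw [dist_eq_norm]
        _ < C * (ε / C) := by exact mul_lt_mul_of_pos_left hy h
        _ = ε := by field_simp
  by_cases hd : ∃ z : Fin d → ℝ, z ≠ 0
  · obtain ⟨z, hz⟩ := hd
    have hzn : ‖z‖ ≠ 0 := norm_ne_zero_iff.mpr hz
    have hwmem : (‖z‖⁻¹ • z) ∈ Metric.sphere (0 : Fin d → ℝ) 1 := by
      simp [norm_smul, abs_of_nonneg (inv_nonneg.mpr (norm_nonneg z)), inv_mul_cancel₀ hzn]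
    obtain ⟨x₀, hx₀mem, hmin⟩ :=
      (isCompact_sphere (0 : Fin d → ℝ) 1).exists_isMinOn ⟨_, hwmem⟩ hNcont.continuousOn
    have hx₀norm : ‖x₀‖ = 1 := by simpa using hx₀mem
    have hb : 0 < N x₀ := by
      rcases (hnn x₀).lt_or_eq with h | h
      · exact h
      · exfalso
        have : x₀ = 0 := hN_def x₀ h.symm
        rw [this] at hx₀norm; simp at hx₀norm
    have hlow : ∀ x : Fin d → ℝ, N x₀ * ‖x‖ ≤ N x := by
      intro x
      rcases eq_or_ne x 0 with rfl | hx
      · simp [hN0]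
      · have hxn : ‖x‖ ≠ 0 := norm_ne_zero_iff.mpr hx
        have hmem : (‖x‖⁻¹ • x) ∈ Metric.sphere (0 : Fin d → ℝ) 1 := by
          simp [norm_smul, abs_of_nonneg (inv_nonneg.mpr (norm_nonneg x)),
            inv_mul_cancel₀ hxn]
        have := hmin hmem
        simp only [Set.mem_setOf_eq] at this
        rw [hN_smul] at this
        rw [abs_of_nonneg (inv_nonneg.mpr (norm_nonneg x))] at this
        have hxpos : (0:ℝ) < ‖x‖ := lt_of_le_of_ne (norm_nonneg x) (Ne.symm hxn)
        calc N x₀ * ‖x‖ ≤ (‖x‖⁻¹ * N x) * ‖x‖ :=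
              mul_le_mul_of_nonneg_right this (norm_nonneg x)
          _ = N x := by field_simp
    refine Metric.isCompact_of_isClosed_isBounded ?_ ?_
    · have : {x : Fin d → ℝ | (∀ i, 0 ≤ x i) ∧ N x = 1}
          = (⋂ i, {x : Fin d → ℝ | 0 ≤ x i}) ∩ N ⁻¹' {1} := by
        ext x; simp [Set.mem_iInter]
      rw [this]
      exact IsClosed.inter (isClosed_iInter fun i =>
        isClosed_le continuous_const (continuous_apply i))
        (IsClosed.preimage hNcont isClosed_singleton)
    · refine (Metric.isBounded_closedBall (x := (0 : Fin d → ℝ)) (r := (N x₀)⁻¹)).subset ?_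
      intro x hx
      rw [Metric.mem_closedBall, dist_zero_right]
      have := hlow x
      rw [hx.2] at this
      have h2 : ‖x‖ ≤ (N x₀)⁻¹ * 1 := (le_inv_mul_iff₀ hb).mpr this
      simpa using h2
  · push_neg at hd
    have : {x : Fin d → ℝ | (∀ i, 0 ≤ x i) ∧ N x = 1} = ∅ := by
      ext x
      simp only [Set.mem_setOf_eq, Set.mem_empty_iff_false, iff_false]
      rintro ⟨-, hx1⟩
      rw [hd x, hN0] at hx1
      norm_num at hx1
    rw [this]
    exact isCompact_empty

/-- The positive unit sphere `S^{d-1}_+ = {x ∈ [0,∞)^d : ‖x‖ = 1}` for a norm `N` on `ℝ^d`. -/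
abbrev PosSphere (d : ℕ) (N : (Fin d → ℝ) → ℝ) : Type :=
  {x : Fin d → ℝ // (∀ i, 0 ≤ x i) ∧ N x = 1}

/-- Uniform convergence step in the proof of Theorem 2 of the paper: if the random finite
measures `Ŝ_n` converge weakly in probability to the finite measure `S`, `K ⊆ ℝ^m` is
compact and nonempty and `c : K × S^{d-1}_+ → ℝ` is continuous, then
`sup_{θ ∈ K} |∫ c(θ,·) dŜ_n − ∫ c(θ,·) dS| → 0` in probability. -/
theorem sup_integral_dist_tendstoInMeasure_zero
    {d m : ℕ} (N : (Fin d → ℝ) → ℝ)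
    (hN_tri : ∀ x y, N (x + y) ≤ N x + N y)
    (hN_smul : ∀ (c : ℝ) (x), N (c • x) = |c| * N x)
    (hN_def : ∀ x, N x = 0 → x = 0)
    {Ω : Type} [MeasurableSpace Ω] (P : Measure Ω) [IsProbabilityMeasure P]
    (S : Measure (PosSphere d N)) [IsFiniteMeasure S]
    (Shat : ℕ → Ω → Measure (PosSphere d N))
    (hShat_fin : ∀ n ω, IsFiniteMeasure (Shat n ω))
    (hShat_meas : ∀ (n : ℕ) (f : PosSphere d N → ℝ), Continuous f →
      Measurable fun ω => ∫ a, f a ∂(Shat n ω))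
    (hconv : ∀ f : PosSphere d N → ℝ, Continuous f →
      TendstoInMeasure P (fun n ω => ∫ a, f a ∂(Shat n ω)) atTop
        (fun _ => ∫ a, f a ∂S))
    (K : Set (Fin m → ℝ)) (hK : IsCompact K) (hKne : K.Nonempty)
    (c : K → PosSphere d N → ℝ)
    (hc : Continuous fun q : K × PosSphere d N => c q.1 q.2) :
    TendstoInMeasure P
      (fun n ω => ⨆ t : K, |(∫ a, c t a ∂(Shat n ω)) - ∫ a, c t a ∂S|) atTop
      (fun _ => 0) := by
  classical
  haveI : CompactSpace (PosSphere d N) :=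
    isCompact_iff_compactSpace.mp (posSphere_isCompact N hN_tri hN_smul hN_def)
  haveI : BorelSpace (PosSphere d N) :=
    Subtype.borelSpace {x : Fin d → ℝ | (∀ i, 0 ≤ x i) ∧ N x = 1}
  haveI : Nonempty K := hKne.to_subtype
  haveI : CompactSpace K := isCompact_iff_compactSpace.mp hK
  have hc_cont : ∀ t : K, Continuous (c t) := fun t => hc.comp (Continuous.prodMk_right t)
  have hint : ∀ (t : K) (μ : Measure (PosSphere d N)), IsFiniteMeasure μ →
      Integrable (c t) μ := fun t μ hμ =>
    (hc_cont t).integrable_of_hasCompactSupport (isClosed_tsupport _).isCompact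
  set F : C(K, C(PosSphere d N, ℝ)) :=
    ContinuousMap.curry ⟨fun q : K × PosSphere d N => c q.1 q.2, hc⟩ with hFdef
  -- key integral perturbation bound
  have key : ∀ (s t : K) (μ : Measure (PosSphere d N)), IsFiniteMeasure μ →
      |(∫ a, c s a ∂μ) - ∫ a, c t a ∂μ| ≤ dist (F s) (F t) * (μ Set.univ).toReal := by
    intro s t μ hμ
    rw [← integral_sub (hint s μ hμ) (hint t μ hμ)]
    rw [← Real.norm_eq_abs]
    refine norm_integral_le_of_norm_le_const (ae_of_all μ fun a => ?_)
    rw [Real.norm_eq_abs, ← Real.dist_eq]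
    have := ContinuousMap.dist_apply_le_dist (f := F s) (g := F t) a
    simpa [hFdef] using this
  rw [tendstoInMeasure_iff_dist]
  intro ε hε
  set M : ℝ := ∫ a, (1 : ℝ) ∂S with hMdef
  have hM0 : 0 ≤ M := integral_nonneg fun _ => zero_le_one
  have hMuniv : (S Set.univ).toReal = M := by simp [hMdef]; rfl
  set ε' : ℝ := ε / (4 * (M + 1)) with hε'def
  have hε'pos : 0 < ε' := div_pos hε (by positivity)
  -- finite cover of K
  obtain ⟨T, hT⟩ := isCompact_univ.elim_finite_subcover
    (fun t : K => {s : K | dist (F s) (F t) < ε'})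
    (fun t => isOpen_lt (F.continuous.dist continuous_const) continuous_const)
    (fun s _ => Set.mem_iUnion.mpr ⟨s, by simpa using hε'pos⟩)
  have hTne : T.Nonempty := by
    have h := hT (Set.mem_univ (Classical.arbitrary K))
    obtain ⟨t, ht⟩ := Set.mem_iUnion.mp h
    obtain ⟨htT, -⟩ := Set.mem_iUnion.mp ht
    exact ⟨t, htT⟩
  -- main bound on measures
  have hbound : ∀ n,
      P {ω | ε ≤ dist (⨆ t : K, |(∫ a, c t a ∂(Shat n ω)) - ∫ a, c t a ∂S|) 0}
      ≤ P {ω | 1 ≤ dist (∫ a, (1:ℝ) ∂(Shat n ω)) (∫ a, (1:ℝ) ∂S)}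
        + ∑ t ∈ T, P {ω | ε/2 ≤ dist (∫ a, c t a ∂(Shat n ω)) (∫ a, c t a ∂S)} := by
    intro n
    have hincl : {ω | ε ≤ dist (⨆ t : K, |(∫ a, c t a ∂(Shat n ω)) - ∫ a, c t a ∂S|) 0}
        ⊆ {ω | 1 ≤ dist (∫ a, (1:ℝ) ∂(Shat n ω)) (∫ a, (1:ℝ) ∂S)}
          ∪ ⋃ t ∈ T, {ω | ε/2 ≤ dist (∫ a, c t a ∂(Shat n ω)) (∫ a, c t a ∂S)} := by
      intro ω hω
      simp only [Set.mem_setOf_eq] at hω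
      by_contra hcon
      simp only [Set.mem_union, Set.mem_iUnion, Set.mem_setOf_eq, not_or, not_exists,
        not_le] at hcon
      obtain ⟨hmass, hts⟩ := hcon
      haveI := hShat_fin n ω
      -- total mass bound
      have hmass' : ((Shat n ω) Set.univ).toReal ≤ M + 1 := by
        have h2 : (∫ a, (1:ℝ) ∂(Shat n ω)) = ((Shat n ω) Set.univ).toReal := by simp; rfl
        rw [Real.dist_eq, abs_sub_lt_iff] at hmass
        rw [← h2]
        have h3 := hmass.1
        rw [← hMdef] at h3
        linarith
      set maxT : ℝ := T.sup' hTne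
        (fun t => |(∫ a, c t a ∂(Shat n ω)) - ∫ a, c t a ∂S|) with hmaxT
      have hmaxT_lt : maxT < ε/2 := by
        rw [hmaxT, Finset.sup'_lt_iff]
        intro t ht
        have := hts t ht
        rwa [Real.dist_eq] at this
      have hB : ∀ s : K, |(∫ a, c s a ∂(Shat n ω)) - ∫ a, c s a ∂S|
          ≤ ε' * (M + 1) + maxT + ε' * M := by
        intro s
        have hmem := hT (Set.mem_univ s)
        obtain ⟨t, ht⟩ := Set.mem_iUnion.mp hmem
        obtain ⟨htT, hst⟩ := Set.mem_iUnion.mp ht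
        simp only [Set.mem_setOf_eq] at hst
        have k1 := key s t (Shat n ω) inferInstance
        have k2 := key s t S inferInstance
        have hd0 : 0 ≤ dist (F s) (F t) := dist_nonneg
        have b1 : |(∫ a, c s a ∂(Shat n ω)) - ∫ a, c t a ∂(Shat n ω)| ≤ ε' * (M + 1) := by
          refine k1.trans ?_
          have := mul_le_mul hst.le hmass' ENNReal.toReal_nonneg hε'pos.le
          exact this
        have b2 : |(∫ a, c s a ∂S) - ∫ a, c t a ∂S| ≤ ε' * M := by
          refine k2.trans ?_
          rw [hMuniv]
          exact mul_le_mul_of_nonneg_right hst.le hM0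
        have b3 : |(∫ a, c t a ∂(Shat n ω)) - ∫ a, c t a ∂S| ≤ maxT :=
          Finset.le_sup' (f := fun t => |(∫ a, c t a ∂(Shat n ω)) - ∫ a, c t a ∂S|) htT
        have t1 := abs_sub_le (∫ a, c s a ∂(Shat n ω)) (∫ a, c t a ∂(Shat n ω))
          (∫ a, c s a ∂S)
        have t2 := abs_sub_le (∫ a, c t a ∂(Shat n ω)) (∫ a, c t a ∂S) (∫ a, c s a ∂S)
        have b2' : |(∫ a, c t a ∂S) - ∫ a, c s a ∂S| ≤ ε' * M := by
          rwa [abs_sub_comm] at b2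
        linarith [t1, t2, b1, b2', b3]
      have hsup_le : (⨆ t : K, |(∫ a, c t a ∂(Shat n ω)) - ∫ a, c t a ∂S|)
          ≤ ε' * (M + 1) + maxT + ε' * M := ciSup_le hB
      have hlt : ε' * (M + 1) + maxT + ε' * M < ε := by
        have hq : ε' * (M + 1) = ε / 4 := by
          rw [hε'def]; field_simp
        have hq2 : ε' * M ≤ ε / 4 := by
          rw [← hq]
          exact mul_le_mul_of_nonneg_left (by linarith) hε'pos.le
        linarith
      have hnn : 0 ≤ ⨆ t : K, |(∫ a, c t a ∂(Shat n ω)) - ∫ a, c t a ∂S| :=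
        Real.iSup_nonneg fun t => abs_nonneg _
      rw [Real.dist_eq, sub_zero, abs_of_nonneg hnn] at hω
      linarith
    calc P _ ≤ P ({ω | 1 ≤ dist (∫ a, (1:ℝ) ∂(Shat n ω)) (∫ a, (1:ℝ) ∂S)}
          ∪ ⋃ t ∈ T, {ω | ε/2 ≤ dist (∫ a, c t a ∂(Shat n ω)) (∫ a, c t a ∂S)}) :=
        measure_mono hincl
      _ ≤ P {ω | 1 ≤ dist (∫ a, (1:ℝ) ∂(Shat n ω)) (∫ a, (1:ℝ) ∂S)}
          + P (⋃ t ∈ T, {ω | ε/2 ≤ dist (∫ a, c t a ∂(Shat n ω)) (∫ a, c t a ∂S)}) :=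
        measure_union_le _ _
      _ ≤ _ := by
        gcongr
        exact measure_biUnion_finset_le _ _
  -- limits
  have h1 : Tendsto (fun n => P {ω | 1 ≤ dist (∫ a, (1:ℝ) ∂(Shat n ω)) (∫ a, (1:ℝ) ∂S)})
      atTop (𝓝 0) := tendstoInMeasure_iff_dist.mp (hconv (fun _ => (1:ℝ)) continuous_const) 1 one_pos
  have h2 : Tendsto (fun n => ∑ t ∈ T,
      P {ω | ε/2 ≤ dist (∫ a, c t a ∂(Shat n ω)) (∫ a, c t a ∂S)}) atTop (𝓝 0) := by
    have := tendsto_finset_sum T (fun t _ => tendstoInMeasure_iff_dist.mp (hconv (c t) (hc_cont t)) (ε/2) (by linarith))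
    simpa using this
  have hsum : Tendsto (fun n =>
      P {ω | 1 ≤ dist (∫ a, (1:ℝ) ∂(Shat n ω)) (∫ a, (1:ℝ) ∂S)}
      + ∑ t ∈ T, P {ω | ε/2 ≤ dist (∫ a, c t a ∂(Shat n ω)) (∫ a, c t a ∂S)})
      atTop (𝓝 0) := by
    simpa using h1.add h2
  exact tendsto_of_tendsto_of_tendsto_of_le_of_le tendsto_const_nhds hsum
    (fun n => zero_le) hbound
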